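/- arXiv:1705.02501 — 4 statements merged into one kernel-verified Lean document; each statement's English description precedes it below -/
import Mathlib

section
/- Let (ξ_n) be a sequence of complex-valued random variables on a probability space with sup_n ‖ξ_n‖_∞ < ∞. If ∑_{n≥1} E|ξ_0 + ξ_1 + ⋯ + ξ_{n-1}|² / n³ < ∞, then almost surely (1/n)·∑_{k=0}^{n-1} ξ_k → 0 as n → ∞. -/
open MeasureTheory Filter Finset

/-- Deterministic core of the Davenport–Erdős–LeVeque theorem: a nonnegative
sequence with `O(C/n)` increments and summable `g (n+1)^2 / (n+1)` tends to `0`. -/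
private lemma del_det (g : ℕ → ℝ) (C : ℝ) (hC : 0 < C) (hg : ∀ n, 0 ≤ g n)
    (hlip : ∀ n : ℕ, |g (n + 1) - g n| ≤ C / ((n : ℝ) + 1))
    (hsumg : Summable (fun n : ℕ => g (n + 1) ^ 2 / ((n : ℝ) + 1))) :
    Tendsto g atTop (nhds 0) := by
  rw [Metric.tendsto_atTop]
  intro ε hε
  set ε' : ℝ := min ε (2 * C) with hε'def
  have hε'pos : 0 < ε' := lt_min hε (by linarith)
  have hε'le : ε' ≤ 2 * C := min_le_right _ _
  set δ : ℝ := ε' ^ 3 / (16 * C) with hδdef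
  have hδpos : 0 < δ := by positivity
  set h : ℕ → ℝ := fun n => g (n + 1) ^ 2 / ((n : ℝ) + 1) with hh
  have hhn : ∀ n, 0 ≤ h n := fun n => by
    simp only [hh]; positivity
  set s : ℕ → ℝ := fun k => ∑ n ∈ Finset.range k, h n with hs
  have hmono : Monotone s := monotone_nat_of_le_succ (fun n => by
    simp only [hs, Finset.sum_range_succ]; linarith [hhn n])
  obtain ⟨N₀, hN₀⟩ := Metric.cauchySeq_iff'.1 hsumg.hasSum.tendsto_sum_nat.cauchySeq δ hδpos
  refine ⟨N₀ + 1, fun N hN => ?_⟩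
  rw [Real.dist_eq, sub_zero, abs_of_nonneg (hg N)]
  by_contra hcon
  push_neg at hcon
  have hgN : ε' ≤ g N := le_trans (min_le_left _ _) hcon
  obtain ⟨P, rfl⟩ : ∃ P, N = P + 1 := ⟨N - 1, by omega⟩
  have hPN₀ : N₀ ≤ P := by omega
  have hP1 : (0 : ℝ) < (P : ℝ) + 1 := by positivity
  set M : ℕ := Nat.floor (ε' * ((P : ℝ) + 1) / (2 * C)) with hMdef
  have hM1 : (M : ℝ) * (2 * C) ≤ ε' * ((P : ℝ) + 1) := by
    rw [← le_div_iff₀ (by linarith)]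
    exact Nat.floor_le (by positivity)
  have hM2 : ε' * ((P : ℝ) + 1) ≤ ((M : ℝ) + 1) * (2 * C) := by
    rw [← div_le_iff₀ (by linarith)]
    exact (Nat.lt_floor_add_one _).le
  have hMP : (M : ℝ) ≤ (P : ℝ) + 1 := by nlinarith
  -- Step 1: lower bound for `g` on the block
  have step1 : ∀ j : ℕ, ε' - (j : ℝ) * C / ((P : ℝ) + 1) ≤ g (P + 1 + j) := by
    intro j
    induction j with
    | zero => simpa using hgN
    | succ j ih =>
      have hd := hlip (P + 1 + j)
      have h1 : g (P + 1 + j) - C / ((P : ℝ) + 1 + j + 1) ≤ g (P + 1 + j + 1) := by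
        have := (abs_le.1 hd).1
        push_cast at this ⊢
        linarith
      have h2 : C / ((P : ℝ) + 1 + j + 1) ≤ C / ((P : ℝ) + 1) := by
        gcongr
        · linarith
      push_cast
      have : ε' - (j : ℝ) * C / ((P : ℝ) + 1) - C / ((P : ℝ) + 1)
          ≤ g (P + 1 + j + 1) := by linarith
      calc ε' - ((j : ℝ) + 1) * C / ((P : ℝ) + 1)
          = ε' - (j : ℝ) * C / ((P : ℝ) + 1) - C / ((P : ℝ) + 1) := by ring
        _ ≤ g (P + 1 + j + 1) := this
        _ = g (P + 1 + (j + 1)) := rfl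
  have hMC : (M : ℝ) * C / ((P : ℝ) + 1) ≤ ε' / 2 := by
    rw [div_le_iff₀ hP1]
    linarith
  have hglow : ∀ j : ℕ, j ≤ M → ε' / 2 ≤ g (P + 1 + j) := by
    intro j hj
    have h1 := step1 j
    have h2 : (j : ℝ) * C / ((P : ℝ) + 1) ≤ (M : ℝ) * C / ((P : ℝ) + 1) := by
      gcongr
    linarith
  -- Step 2: lower bound for block sum
  have hterm : ∀ j ∈ Finset.range (M + 1),
      (ε' / 2) ^ 2 / ((P : ℝ) + 1 + M) ≤ h (P + j) := by
    intro j hj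
    have hj' : j ≤ M := by
      have := Finset.mem_range.1 hj; omega
    have hgj := hglow j hj'
    have hhe : h (P + j) = g (P + 1 + j) ^ 2 / ((P : ℝ) + 1 + j) := by
      simp only [hh]
      have h1 : P + j + 1 = P + 1 + j := by omega
      rw [h1]
      push_cast
      ring_nf
    rw [hhe]
    apply div_le_div₀ (sq_nonneg _)
    · exact pow_le_pow_left₀ (by positivity) hgj 2
    · positivity
    · have : (j : ℝ) ≤ (M : ℝ) := by exact_mod_cast hj'
      linarith
  have hcard := Finset.card_nsmul_le_sum (Finset.range (M + 1))
    (fun j => h (P + j)) _ hterm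
  rw [Finset.card_range, nsmul_eq_mul] at hcard
  push_cast at hcard
  have hδle : δ ≤ ((M : ℝ) + 1) * ((ε' / 2) ^ 2 / ((P : ℝ) + 1 + M)) := by
    rw [← mul_div_assoc, le_div_iff₀ (by positivity), hδdef, div_mul_eq_mul_div,
      div_le_iff₀ (by linarith : (0:ℝ) < 16 * C)]
    nlinarith [mul_le_mul_of_nonneg_left hM2 (sq_nonneg ε'),
      mul_le_mul_of_nonneg_left hMP (pow_nonneg hε'pos.le 3)]
  have hblock : δ ≤ ∑ j ∈ Finset.range (M + 1), h (P + j) := le_trans hδle hcard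
  -- Step 3: block sum is smaller than δ, contradiction
  have hseq : ∑ j ∈ Finset.range (M + 1), h (P + j) = s (P + M + 1) - s P := by
    have h1 : ∑ j ∈ Finset.range (M + 1), h (P + j)
        = ∑ i ∈ Finset.Ico P (P + M + 1), h i := by
      rw [Finset.sum_Ico_eq_sum_range]
      have h2 : P + M + 1 - P = M + 1 := by omega
      rw [h2]
    rw [h1, Finset.sum_Ico_eq_sub _ (by omega)]
  have hd1 : dist (s (P + M + 1)) (s N₀) < δ := hN₀ _ (by omega)
  rw [Real.dist_eq] at hd1
  have hd2 : s (P + M + 1) - s N₀ < δ := lt_of_le_of_lt (le_abs_self _) hd1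
  have hsP : s N₀ ≤ s P := hmono hPN₀
  rw [hseq] at hblock
  linarith

/-- Davenport–Erdős–LeVeque theorem. -/
theorem davenport_erdos_leveque
    {Ω : Type*} [MeasurableSpace Ω] (μ : Measure Ω) [IsProbabilityMeasure μ]
    (ξ : ℕ → Ω → ℂ) (hmeas : ∀ n, Measurable (ξ n))
    (B : ℝ) (hbd : ∀ n, ∀ᵐ ω ∂μ, ‖ξ n ω‖ ≤ B)
    (hsum : Summable fun n : ℕ =>
      (∫ ω, ‖∑ k ∈ Finset.range (n + 1), ξ k ω‖ ^ 2 ∂μ) / ((n : ℝ) + 1) ^ 3) :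
    ∀ᵐ ω ∂μ, Tendsto (fun n : ℕ => (n : ℂ)⁻¹ • ∑ k ∈ Finset.range n, ξ k ω)
      atTop (nhds 0) := by
  have hB0 : 0 ≤ B := by
    obtain ⟨ω, hω⟩ := (hbd 0).exists
    exact le_trans (norm_nonneg _) hω
  have hSmeas : ∀ n : ℕ, Measurable (fun ω => ∑ k ∈ Finset.range n, ξ k ω) :=
    fun n => Finset.measurable_sum _ (fun k _ => hmeas k)
  have hae1 : ∀ᵐ ω ∂μ, ∀ n, ‖ξ n ω‖ ≤ B := ae_all_iff.2 hbd
  have hSbd : ∀ᵐ ω ∂μ, ∀ m : ℕ, ‖∑ k ∈ Finset.range m, ξ k ω‖ ≤ (m : ℝ) * B := by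
    filter_upwards [hae1] with ω hω
    intro m
    calc ‖∑ k ∈ Finset.range m, ξ k ω‖ ≤ ∑ k ∈ Finset.range m, ‖ξ k ω‖ :=
          norm_sum_le _ _
      _ ≤ ∑ _k ∈ Finset.range m, B := Finset.sum_le_sum (fun k _ => hω k)
      _ = (m : ℝ) * B := by simp [mul_comm]
  have hint : ∀ n : ℕ,
      Integrable (fun ω => ‖∑ k ∈ Finset.range (n + 1), ξ k ω‖ ^ 2 / ((n : ℝ) + 1) ^ 3) μ := by
    intro n
    apply Integrable.mono'
      (integrable_const ((((n : ℝ) + 1) * B) ^ 2 / ((n : ℝ) + 1) ^ 3))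
    · exact (((hSmeas (n + 1)).norm.pow_const 2).div_const _).aestronglyMeasurable
    · filter_upwards [hSbd] with ω hω
      have h1 : ‖∑ k ∈ Finset.range (n + 1), ξ k ω‖ ≤ ((n : ℝ) + 1) * B := by
        have := hω (n + 1); push_cast at this; exact this
      rw [Real.norm_eq_abs, abs_of_nonneg (by positivity)]
      gcongr
  -- almost sure summability
  have key : ∀ᵐ ω ∂μ,
      Summable (fun n : ℕ => ‖∑ k ∈ Finset.range (n + 1), ξ k ω‖ ^ 2 / ((n : ℝ) + 1) ^ 3) := by
    set F : ℕ → Ω → ENNReal := fun n ω =>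
      ENNReal.ofReal (‖∑ k ∈ Finset.range (n + 1), ξ k ω‖ ^ 2 / ((n : ℝ) + 1) ^ 3) with hF
    have hFmeas : ∀ n, Measurable (F n) := fun n =>
      (((hSmeas (n + 1)).norm.pow_const 2).div_const _).ennreal_ofReal
    have hlt : ∫⁻ ω, (∑' n, F n ω) ∂μ < ⊤ := by
      rw [lintegral_tsum (fun n => (hFmeas n).aemeasurable)]
      have heq : ∀ n : ℕ, ∫⁻ ω, F n ω ∂μ =
          ENNReal.ofReal
            ((∫ ω, ‖∑ k ∈ Finset.range (n + 1), ξ k ω‖ ^ 2 ∂μ) / ((n : ℝ) + 1) ^ 3) := by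
        intro n
        rw [← integral_div,
          ← ofReal_integral_eq_lintegral_ofReal (hint n) (ae_of_all _ fun ω => by positivity)]
      simp_rw [heq]
      rw [← ENNReal.ofReal_tsum_of_nonneg
        (fun n => div_nonneg (integral_nonneg (fun ω => by positivity)) (by positivity)) hsum]
      exact ENNReal.ofReal_lt_top
    have htsm : Measurable (fun ω => ∑' n, F n ω) := Measurable.ennreal_tsum hFmeas
    filter_upwards [ae_lt_top htsm hlt.ne] with ω hω
    apply summable_of_sum_range_le (c := (∑' n, F n ω).toReal) (fun n => by positivity)
    intro k
    have h1 : ENNReal.ofReal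
        (∑ i ∈ Finset.range k, ‖∑ j ∈ Finset.range (i + 1), ξ j ω‖ ^ 2 / ((i : ℝ) + 1) ^ 3)
        = ∑ i ∈ Finset.range k, F i ω :=
      ENNReal.ofReal_sum_of_nonneg (fun i _ => by positivity)
    have h2 : ∑ i ∈ Finset.range k, F i ω ≤ ∑' n, F n ω := ENNReal.sum_le_tsum _
    exact (ENNReal.ofReal_le_iff_le_toReal hω.ne).1 (h1 ▸ h2)
  -- combine
  filter_upwards [hae1, key] with ω hB hsummable
  rw [tendsto_zero_iff_norm_tendsto_zero]
  have hnorm : (fun n : ℕ => ‖(n : ℂ)⁻¹ • ∑ k ∈ Finset.range n, ξ k ω‖)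
      = fun n : ℕ => ‖∑ k ∈ Finset.range n, ξ k ω‖ / (n : ℝ) := by
    funext n
    rw [norm_smul, norm_inv, Complex.norm_natCast, div_eq_inv_mul]
  rw [hnorm]
  have hSb : ∀ m : ℕ, ‖∑ k ∈ Finset.range m, ξ k ω‖ ≤ (m : ℝ) * B := by
    intro m
    calc ‖∑ k ∈ Finset.range m, ξ k ω‖ ≤ ∑ k ∈ Finset.range m, ‖ξ k ω‖ :=
          norm_sum_le _ _
      _ ≤ ∑ _k ∈ Finset.range m, B := Finset.sum_le_sum (fun k _ => hB k)
      _ = (m : ℝ) * B := by simp [mul_comm]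
  apply del_det _ (2 * B + 1) (by linarith) (fun n => by positivity)
  · -- Lipschitz-type bound
    intro n
    match n with
    | 0 =>
      simp only [Nat.cast_zero, zero_add, Nat.cast_one, Finset.range_zero,
        Finset.sum_empty, norm_zero, zero_div, sub_zero, div_one, Finset.range_one,
        Finset.sum_singleton]
      rw [abs_of_nonneg (by positivity)]
      have := hB 0
      linarith
    | (m + 1) =>
      set n := m + 1 with hn
      have hx : (1 : ℝ) ≤ (n : ℝ) := by exact_mod_cast Nat.one_le_iff_ne_zero.2 (by omega)
      have hx0 : (0 : ℝ) < (n : ℝ) := by linarith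
      have hx1 : (0 : ℝ) < (n : ℝ) + 1 := by linarith
      set a : ℝ := ‖∑ k ∈ Finset.range (n + 1), ξ k ω‖ with ha
      set b : ℝ := ‖∑ k ∈ Finset.range n, ξ k ω‖ with hb'
      have hab : |a - b| ≤ B := by
        have hsr : ∑ k ∈ Finset.range (n + 1), ξ k ω
            = (∑ k ∈ Finset.range n, ξ k ω) + ξ n ω := Finset.sum_range_succ _ _
        calc |a - b| ≤ ‖(∑ k ∈ Finset.range (n + 1), ξ k ω) - ∑ k ∈ Finset.range n, ξ k ω‖ :=
              abs_norm_sub_norm_le _ _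
          _ = ‖ξ n ω‖ := by rw [hsr]; ring_nf
          _ ≤ B := hB n
      have hbB : b ≤ (n : ℝ) * B := hSb n
      have hbnn : 0 ≤ b := norm_nonneg _
      have hcast : (↑(n + 1) : ℝ) = (n : ℝ) + 1 := by push_cast; ring
      rw [hcast]
      rw [div_sub_div _ _ (ne_of_gt hx1) (ne_of_gt hx0), abs_div,
        abs_of_pos (by positivity : (0 : ℝ) < ((n : ℝ) + 1) * n),
        div_le_div_iff₀ (by positivity) hx1]
      have habs : |a * (n : ℝ) - ((n : ℝ) + 1) * b| ≤ 2 * B * (n : ℝ) := by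
        have he : a * (n : ℝ) - ((n : ℝ) + 1) * b = (a - b) * (n : ℝ) + (-b) := by ring
        calc |a * (n : ℝ) - ((n : ℝ) + 1) * b| = |(a - b) * (n : ℝ) + (-b)| := by rw [he]
          _ ≤ |(a - b) * (n : ℝ)| + |(-b)| := abs_add_le _ _
          _ = |a - b| * (n : ℝ) + b := by
              rw [abs_mul, abs_of_nonneg hx0.le, abs_neg, abs_of_nonneg hbnn]
          _ ≤ B * (n : ℝ) + (n : ℝ) * B := by
              refine add_le_add (mul_le_mul_of_nonneg_right hab hx0.le) hbB
          _ = 2 * B * (n : ℝ) := by ring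
      calc |a * (n : ℝ) - ((n : ℝ) + 1) * b| * ((n : ℝ) + 1)
          ≤ (2 * B * (n : ℝ)) * ((n : ℝ) + 1) :=
            mul_le_mul_of_nonneg_right habs hx1.le
        _ ≤ (2 * B + 1) * (((n : ℝ) + 1) * (n : ℝ)) := by nlinarith
  · -- summability
    have hfe : (fun n : ℕ => (‖∑ k ∈ Finset.range (n + 1), ξ k ω‖ / (↑(n + 1) : ℝ)) ^ 2
        / ((n : ℝ) + 1))
        = fun n : ℕ => ‖∑ k ∈ Finset.range (n + 1), ξ k ω‖ ^ 2 / ((n : ℝ) + 1) ^ 3 := by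
      funext n
      push_cast
      rw [div_pow, div_div]
      ring_nf
    rw [hfe]
    exact hsummable
end

section
/- Let (X, 𝓑, ν, T) be a measure-preserving dynamical system and f ∈ L^∞(ν). Let (w_n) be a bounded sequence of complex numbers such that ∑_{n≥1} (1/n³)·max_{0≤t≤1}|∑_{k=0}^{n-1} w_k e^{2πi k t}|² < ∞. Then for ν-almost every x, (1/N)·∑_{n=0}^{N-1} w_n f(T^n x) → 0 as N → ∞. -/
open MeasureTheory Filter Finset Real Set

open scoped ComplexConjugate
open AddCircle
noncomputable section
abbrev μ₀ : Measure (AddCircle (1:ℝ)) := haarAddCircle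

lemma cont_int {E : Type*} [NormedAddCommGroup E] {F : AddCircle (1:ℝ) → E} (hF : Continuous F) : Integrable F μ₀ :=
  (memLp_one_iff_integrable).mp <|
    hF.memLp_of_hasCompactSupport (μ := μ₀) (p := 1) (HasCompactSupport.of_compactSpace F)

lemma cont_memL2 {F : AddCircle (1:ℝ) → ℂ} (hF : Continuous F) : MemLp F 2 μ₀ :=
  hF.memLp_of_hasCompactSupport (μ := μ₀) (p := 2) (HasCompactSupport.of_compactSpace F)

lemma fourierCoeff_congr {F G : AddCircle (1:ℝ) → ℂ} (h : F =ᵐ[μ₀] G) (n : ℤ) :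
    fourierCoeff F n = fourierCoeff G n := by
  unfold fourierCoeff
  exact integral_congr_ae (h.mono fun t ht => by show _ • _ = _ • _; rw [ht])

lemma fourierCoeff_fourier' (k n : ℤ) :
    fourierCoeff (fourier k : AddCircle (1:ℝ) → ℂ) n = if n = k then 1 else 0 := by
  classical
  have h2 := fourierBasis_repr (T := 1) (fourierLp 2 k) n
  have h3 : (fourierLp 2 k : Lp ℂ 2 μ₀) = fourierBasis k := by
    rw [← coe_fourierBasis]
  rw [h3, HilbertBasis.repr_self, lp.single_apply] at h2
  have h4 : fourierCoeff (↑(fourierBasis (T := 1) k) : AddCircle (1:ℝ) → ℂ) n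
      = fourierCoeff (fourier k : AddCircle (1:ℝ) → ℂ) n := by
    apply fourierCoeff_congr
    rw [← h3]
    exact coeFn_fourierLp 2 k
  rw [← h4, ← h2]
  simp [Pi.single_apply]

lemma fourierCoeff_finsum {ι : Type*} (s : Finset ι) (c : ι → ℂ) (d : ι → ℤ) (n : ℤ) :
    fourierCoeff (fun t : AddCircle (1:ℝ) => ∑ i ∈ s, c i * fourier (d i) t) n
      = ∑ i ∈ s, c i * (if n = d i then 1 else 0) := by
  classical
  unfold fourierCoeff
  have h1 : ∀ t : AddCircle (1:ℝ),
      (fourier (-n) t : ℂ) • (∑ i ∈ s, c i * fourier (d i) t)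
        = ∑ i ∈ s, c i • (fourier (-n) t * fourier (d i) t) := by
    intro t
    rw [Finset.smul_sum]
    refine Finset.sum_congr rfl fun i _ => by
      simp [smul_eq_mul]; ring
  simp_rw [h1]
  rw [integral_finset_sum]
  · refine Finset.sum_congr rfl fun i _ => ?_
    rw [integral_smul]
    have : ∫ t : AddCircle (1:ℝ), fourier (-n) t * fourier (d i) t ∂μ₀
        = fourierCoeff (fourier (d i) : AddCircle (1:ℝ) → ℂ) n := by
      unfold fourierCoeff
      simp [smul_eq_mul]
    rw [this, fourierCoeff_fourier', smul_eq_mul]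
  · intro i _
    exact (cont_int (((fourier (-n)).continuous).mul ((fourier (d i)).continuous))).smul (c i)

lemma tsum_sq_fourierCoeff_cont {F : AddCircle (1:ℝ) → ℂ} (hF : Continuous F) :
    ∑' n : ℤ, ‖fourierCoeff F n‖ ^ 2 = ∫ t : AddCircle (1:ℝ), ‖F t‖ ^ 2 ∂μ₀ := by
  have hmem : MemLp F 2 μ₀ := cont_memL2 hF
  have h := tsum_sq_fourierCoeff (hmem.toLp F)
  have hae : (↑(hmem.toLp F) : AddCircle (1:ℝ) → ℂ) =ᵐ[μ₀] F := hmem.coeFn_toLp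
  have h1 : ∀ n, fourierCoeff (↑(hmem.toLp F) : AddCircle (1:ℝ) → ℂ) n = fourierCoeff F n :=
    fun n => fourierCoeff_congr hae n
  have h2 : ∫ t : AddCircle (1:ℝ), ‖(hmem.toLp F) t‖ ^ 2 ∂μ₀
      = ∫ t : AddCircle (1:ℝ), ‖F t‖ ^ 2 ∂μ₀ :=
    integral_congr_ae (hae.mono fun t ht => by show ‖_‖^2 = ‖_‖^2; rw [ht])
  rw [← h2, ← h]
  exact tsum_congr fun n => by rw [h1]

lemma coeff_finsum_nat (c : ℕ → ℂ) (K : ℕ) (n : ℤ) :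
    fourierCoeff (fun τ : AddCircle (1:ℝ) => ∑ j ∈ range K, c j * fourier (j:ℤ) τ) n
      = if 0 ≤ n ∧ n.toNat < K then c n.toNat else 0 := by
  classical
  rw [fourierCoeff_finsum (range K) c (fun j => (j:ℤ)) n]
  have : ∀ j ∈ range K, c j * (if n = (j:ℤ) then 1 else 0)
      = if (if 0 ≤ n ∧ n.toNat < K then n.toNat else K) = j then c j else 0 := by
    intro j hj
    rw [Finset.mem_range] at hj
    by_cases h : n = (j : ℤ)
    · subst h
      simp [hj, Int.toNat_natCast]
    · rw [if_neg h, mul_zero, if_neg ?_]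
      intro hh
      apply h
      by_cases h0 : 0 ≤ n ∧ n.toNat < K
      · rw [if_pos h0] at hh
        subst hh
        exact (Int.toNat_of_nonneg h0.1).symm
      · rw [if_neg h0] at hh; omega
  rw [Finset.sum_congr rfl this, Finset.sum_ite_eq (range K)]
  by_cases h0 : 0 ≤ n ∧ n.toNat < K
  · simp [h0]
  · simp only [if_neg h0, Finset.mem_range]
    rw [if_neg (by omega)]

lemma parseval_nat (c : ℕ → ℂ) (K : ℕ) :
    ∫ τ : AddCircle (1:ℝ), ‖∑ j ∈ range K, c j * fourier (j:ℤ) τ‖ ^ 2 ∂μ₀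
      = ∑ j ∈ range K, ‖c j‖ ^ 2 := by
  classical
  have hc : Continuous (fun τ : AddCircle (1:ℝ) => ∑ j ∈ range K, c j * fourier (j:ℤ) τ) := by
    exact continuous_finset_sum _ fun j _ => continuous_const.mul (fourier _).continuous
  rw [← tsum_sq_fourierCoeff_cont hc]
  have hsupp : ∀ n : ℤ, n ∉ (range K).image (fun j : ℕ => (j:ℤ)) →
      ‖fourierCoeff (fun τ : AddCircle (1:ℝ) => ∑ j ∈ range K, c j * fourier (j:ℤ) τ) n‖^2 = 0 := by
    intro n hn
    rw [coeff_finsum_nat, if_neg, norm_zero]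
    · simp
    · intro h0
      exact hn (Finset.mem_image.2 ⟨n.toNat, Finset.mem_range.2 h0.2, Int.toNat_of_nonneg h0.1⟩)
  rw [tsum_eq_sum hsupp, Finset.sum_image (fun a _ b _ h => Int.ofNat_inj.mp h)]
  refine Finset.sum_congr rfl fun j hj => ?_
  rw [Finset.mem_range] at hj
  rw [coeff_finsum_nat, if_pos (by simp [hj])]
  simp

lemma key_ineq (w g : ℕ → ℂ) (N L : ℕ) (M : ℝ)
    (hM : ∀ τ : AddCircle (1:ℝ), ‖∑ k ∈ range N, w k * fourier (-(k:ℤ)) τ‖ ^ 2 ≤ M) :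
    ∑ m ∈ range L, ‖∑ k ∈ range N, w k * g (m + k)‖ ^ 2
      ≤ M * ∑ j ∈ range (L + N), ‖g j‖ ^ 2 := by
  classical
  set Wt : AddCircle (1:ℝ) → ℂ := fun τ => ∑ k ∈ range N, w k * fourier (-(k:ℤ)) τ with hWt
  set G : AddCircle (1:ℝ) → ℂ := fun τ => ∑ j ∈ range (L+N), g j * fourier (j:ℤ) τ with hG
  set F : AddCircle (1:ℝ) → ℂ := fun τ => Wt τ * G τ with hF
  have hWtc : Continuous Wt := continuous_finset_sum _ fun k _ => continuous_const.mul (fourier _).continuous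
  have hGc : Continuous G := continuous_finset_sum _ fun j _ => continuous_const.mul (fourier _).continuous
  have hFc : Continuous F := hWtc.mul hGc
  have hFeq : F = fun τ => ∑ p ∈ (range N) ×ˢ (range (L+N)),
      (w p.1 * g p.2) * fourier ((p.2:ℤ) - (p.1:ℤ)) τ := by
    funext τ
    rw [hF, hWt, hG]
    simp only
    rw [Finset.sum_mul_sum, ← Finset.sum_product']
    refine Finset.sum_congr rfl fun p _ => ?_
    have : ((p.2:ℤ) - (p.1:ℤ)) = (-(p.1:ℤ)) + (p.2:ℤ) := by ring
    rw [this, fourier_add]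
    ring
  have hcoef : ∀ n : ℤ, fourierCoeff F n
      = ∑ p ∈ (range N) ×ˢ (range (L+N)),
          (w p.1 * g p.2) * (if n = (p.2:ℤ) - (p.1:ℤ) then 1 else 0) := by
    intro n
    rw [hFeq]
    exact fourierCoeff_finsum _ _ _ n
  have cFm : ∀ m : ℕ, m < L → fourierCoeff F (m:ℤ) = ∑ k ∈ range N, w k * g (m + k) := by
    intro m hm
    rw [hcoef, Finset.sum_product]
    refine Finset.sum_congr rfl fun k hk => ?_
    rw [Finset.mem_range] at hk
    have h1 : ∀ j ∈ range (L+N), (w k * g j) * (if (m:ℤ) = (j:ℤ) - (k:ℤ) then 1 else 0)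
        = if (m + k) = j then w k * g j else 0 := by
      intro j _
      by_cases h : (m:ℤ) = (j:ℤ) - (k:ℤ)
      · have : m + k = j := by omega
        rw [if_pos h, if_pos this, mul_one]
      · have : ¬ (m + k = j) := by omega
        rw [if_neg h, if_neg this, mul_zero]
    rw [Finset.sum_congr rfl h1, Finset.sum_ite_eq (range (L+N)),
      if_pos (Finset.mem_range.2 (by omega))]
  have hsummable : Summable fun n : ℤ => ‖fourierCoeff F n‖ ^ 2 := by
    apply summable_of_ne_finset_zero
      (s := ((range N) ×ˢ (range (L+N))).image fun p : ℕ × ℕ => (p.2:ℤ) - (p.1:ℤ))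
    intro n hn
    rw [hcoef]
    rw [Finset.sum_eq_zero, norm_zero]
    · norm_num
    · intro p hp
      rw [if_neg, mul_zero]
      intro h
      exact hn (Finset.mem_image.2 ⟨p, hp, h.symm⟩)
  have step1 : ∑ m ∈ range L, ‖∑ k ∈ range N, w k * g (m + k)‖ ^ 2
      ≤ ∑' n : ℤ, ‖fourierCoeff F n‖ ^ 2 := by
    have : ∑ m ∈ range L, ‖∑ k ∈ range N, w k * g (m + k)‖ ^ 2
        = ∑ n ∈ (range L).image (fun m : ℕ => (m:ℤ)), ‖fourierCoeff F n‖ ^ 2 := by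
      rw [Finset.sum_image (fun a _ b _ h => Int.ofNat_inj.mp h)]
      refine Finset.sum_congr rfl fun m hm => ?_
      rw [cFm m (Finset.mem_range.mp hm)]
    rw [this]
    exact Summable.sum_le_tsum _ (fun n _ => sq_nonneg _) hsummable
  have step2 : ∑' n : ℤ, ‖fourierCoeff F n‖ ^ 2 ≤ M * ∑ j ∈ range (L+N), ‖g j‖ ^ 2 := by
    rw [tsum_sq_fourierCoeff_cont hFc, ← parseval_nat g (L+N), ← integral_const_mul]
    apply integral_mono (cont_int (hFc.norm.pow 2)) (cont_int (continuous_const.mul (hGc.norm.pow 2)))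
    intro τ
    simp only [Pi.pow_apply, Pi.mul_apply]
    have : ‖F τ‖ ^ 2 = ‖Wt τ‖^2 * ‖G τ‖^2 := by
      rw [hF]; simp only; rw [norm_mul, mul_pow]
    rw [this]
    exact mul_le_mul_of_nonneg_right (hM τ) (by positivity)
  exact step1.trans step2

lemma norm_exp_two_pi (k : ℕ) (t : ℝ) : ‖Complex.exp (2*π*Complex.I*k*t)‖ = 1 := by
  have : (2*(π:ℂ)*Complex.I*k*t) = ((2*π*k*t : ℝ):ℂ) * Complex.I := by push_cast; ring
  rw [this, Complex.norm_exp_ofReal_mul_I]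

lemma sup_bound (w : ℕ → ℂ) (N : ℕ) (τ : AddCircle (1:ℝ)) :
    ‖∑ k ∈ range N, w k * fourier (-(k:ℤ)) τ‖ ^ 2
      ≤ ⨆ t : Set.Icc (0:ℝ) 1,
          ‖∑ k ∈ range N, w k * Complex.exp (2 * π * Complex.I * k * t.1)‖ ^ 2 := by
  have hbdd : BddAbove (Set.range fun t : Set.Icc (0:ℝ) 1 =>
      ‖∑ k ∈ range N, w k * Complex.exp (2 * π * Complex.I * k * t.1)‖ ^ 2) := by
    refine ⟨(∑ k ∈ range N, ‖w k‖) ^ 2, ?_⟩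
    rintro x ⟨t, rfl⟩
    apply pow_le_pow_left₀ (norm_nonneg _)
    refine (norm_sum_le _ _).trans ?_
    refine Finset.sum_le_sum fun k _ => ?_
    rw [norm_mul, norm_exp_two_pi, mul_one]
  set s : Set.Ico (0:ℝ) (0+1) := (AddCircle.equivIco 1 0) τ with hs
  have hτ : ((s:ℝ) : AddCircle (1:ℝ)) = τ := (AddCircle.equivIco 1 0).symm_apply_apply τ
  have hmem : (1:ℝ) - (s:ℝ) ∈ Set.Icc (0:ℝ) 1 := by
    have h2 := s.2
    rw [Set.mem_Ico] at h2
    constructor <;> [linarith [h2.2]; linarith [h2.1]]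
  have hval : ∑ k ∈ range N, w k * fourier (-(k:ℤ)) τ
      = ∑ k ∈ range N, w k * Complex.exp (2 * π * Complex.I * k * ((⟨1 - (s:ℝ), hmem⟩ : Set.Icc (0:ℝ) 1)).1) := by
    refine Finset.sum_congr rfl fun k _ => ?_
    rw [← hτ, fourier_coe_apply]
    congr 1
    rw [show (2 * (π:ℂ) * Complex.I * (k:ℂ) * ((1:ℝ) - (s:ℝ) : ℝ))
        = 2 * π * Complex.I * ((-(k:ℤ) : ℤ):ℂ) * ((s:ℝ):ℂ) / (1:ℝ) + (k:ℤ) * (2 * π * Complex.I) by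
      push_cast; ring]
    rw [Complex.exp_add, Complex.exp_int_mul_two_pi_mul_I, mul_one]
  rw [hval]
  exact le_ciSup hbdd (⟨1 - (s:ℝ), hmem⟩ : Set.Icc (0:ℝ) 1)

lemma spectral_bound {X : Type*} [MeasurableSpace X] (ν : Measure X) [IsProbabilityMeasure ν]
    (T : X → X) (hT : MeasurePreserving T ν ν)
    (f : X → ℂ) (hf : Measurable f) (B : ℝ) (hB0 : 0 ≤ B) (hfB : ∀ x, ‖f x‖ ≤ B)
    (w : ℕ → ℂ) (N : ℕ) (M : ℝ)
    (hM : ∀ τ : AddCircle (1:ℝ), ‖∑ k ∈ range N, w k * fourier (-(k:ℤ)) τ‖ ^ 2 ≤ M) :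
    ∫ x, ‖∑ k ∈ range N, w k * f (T^[k] x)‖ ^ 2 ∂ν ≤ M * B ^ 2 := by
  have hM0 : 0 ≤ M := le_trans (sq_nonneg _) (hM 0)
  have hmT : ∀ m : ℕ, Measurable (T^[m]) := fun m => (hT.iterate m).measurable
  -- measurability / integrability helpers
  have hSmeas : ∀ m : ℕ, Measurable fun x => ∑ k ∈ range N, w k * f (T^[k] (T^[m] x)) := by
    intro m
    exact (Finset.measurable_sum _ fun k _ =>
      (measurable_const.mul (hf.comp ((hmT k).comp (hmT m))))).comp measurable_id |>.mono le_rfl le_rfl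
  have hCb : ∀ m x, ‖∑ k ∈ range N, w k * f (T^[k] (T^[m] x))‖ ≤ ∑ k ∈ range N, ‖w k‖ * B := by
    intro m x
    refine (norm_sum_le _ _).trans (Finset.sum_le_sum fun k _ => ?_)
    rw [norm_mul]
    exact mul_le_mul_of_nonneg_left (hfB _) (norm_nonneg _)
  have hint : ∀ m : ℕ, Integrable (fun x => ‖∑ k ∈ range N, w k * f (T^[k] (T^[m] x))‖ ^ 2) ν := by
    intro m
    refine Integrable.mono' (integrable_const ((∑ k ∈ range N, ‖w k‖ * B) ^ 2))
      (((hSmeas m).norm.pow_const 2).aestronglyMeasurable) (ae_of_all _ fun x => ?_)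
    rw [Real.norm_eq_abs, abs_of_nonneg (sq_nonneg _)]
    exact pow_le_pow_left₀ (norm_nonneg _) (hCb m x) 2
  set φ : X → ℝ := fun x => ‖∑ k ∈ range N, w k * f (T^[k] x)‖ ^ 2 with hφ
  have hφmeas : Measurable φ := by
    have := hSmeas 0
    simpa using (this.norm.pow_const 2)
  have hshift : ∀ m : ℕ, ∫ x, φ (T^[m] x) ∂ν = ∫ x, φ x ∂ν := by
    intro m
    have h := integral_map (μ := ν) (hmT m).aemeasurable (f := φ)
      (by rw [(hT.iterate m).map_eq]; exact hφmeas.aestronglyMeasurable)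
    rw [(hT.iterate m).map_eq] at h
    exact h.symm
  have hfj : ∀ j : ℕ, ∫ x, ‖f (T^[j] x)‖ ^ 2 ∂ν = ∫ x, ‖f x‖ ^ 2 ∂ν := by
    intro j
    have h := integral_map (μ := ν) (hmT j).aemeasurable (f := fun y => ‖f y‖ ^ 2)
      (by rw [(hT.iterate j).map_eq]; exact (hf.norm.pow_const 2).aestronglyMeasurable)
    rw [(hT.iterate j).map_eq] at h
    exact h.symm
  have hfint : ∀ j : ℕ, Integrable (fun x => ‖f (T^[j] x)‖ ^ 2) ν := by
    intro j
    refine Integrable.mono' (integrable_const (B ^ 2))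
      (((hf.comp (hmT j)).norm.pow_const 2).aestronglyMeasurable) (ae_of_all _ fun x => ?_)
    rw [Real.norm_eq_abs, abs_of_nonneg (sq_nonneg _)]
    exact pow_le_pow_left₀ (norm_nonneg _) (hfB _) 2
  have hf2 : ∫ x, ‖f x‖ ^ 2 ∂ν ≤ B ^ 2 := by
    calc ∫ x, ‖f x‖ ^ 2 ∂ν ≤ ∫ _x, B ^ 2 ∂ν := by
          refine integral_mono (hfint 0 |>.congr ?_) (integrable_const _) fun x => ?_
          · exact ae_of_all _ fun x => by simp
          · exact pow_le_pow_left₀ (norm_nonneg _) (hfB x) 2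
      _ = B ^ 2 := by simp
  have key : ∀ L : ℕ, (L:ℝ) * ∫ x, φ x ∂ν ≤ M * ((L:ℝ) + N) * B ^ 2 := by
    intro L
    have h1 : (L:ℝ) * ∫ x, φ x ∂ν = ∑ m ∈ range L, ∫ x, φ (T^[m] x) ∂ν := by
      rw [Finset.sum_congr rfl fun m _ => hshift m]
      simp [mul_comm]
    have h2 : ∑ m ∈ range L, ∫ x, φ (T^[m] x) ∂ν = ∫ x, ∑ m ∈ range L, φ (T^[m] x) ∂ν := by
      rw [integral_finset_sum]
      intro m _
      exact hint m
    have h3 : ∫ x, ∑ m ∈ range L, φ (T^[m] x) ∂ν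
        ≤ ∫ x, M * ∑ j ∈ range (L + N), ‖f (T^[j] x)‖ ^ 2 ∂ν := by
      refine integral_mono ?_ ?_ fun x => ?_
      · exact integrable_finset_sum _ fun m _ => hint m
      · exact (integrable_finset_sum _ fun j _ => hfint j).const_mul M
      · have := key_ineq w (fun j => f (T^[j] x)) N L M hM
        refine le_trans (le_of_eq ?_) this
        refine Finset.sum_congr rfl fun m _ => ?_
        show ‖∑ k ∈ range N, w k * f (T^[k] (T^[m] x))‖ ^ 2 = _
        refine congrArg (fun z => z ^ 2) (congrArg norm (Finset.sum_congr rfl fun k _ => ?_))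
        show _ = w k * f (T^[m+k] x)
        rw [Nat.add_comm m k, Function.iterate_add_apply]
    have h4 : ∫ x, M * ∑ j ∈ range (L + N), ‖f (T^[j] x)‖ ^ 2 ∂ν ≤ M * ((L:ℝ) + N) * B ^ 2 := by
      rw [integral_const_mul]
      rw [integral_finset_sum _ fun j _ => hfint j]
      rw [Finset.sum_congr rfl fun j _ => hfj j, Finset.sum_const, Finset.card_range, nsmul_eq_mul]
      calc M * ((L + N : ℕ) * ∫ x, ‖f x‖ ^ 2 ∂ν)
          ≤ M * ((L + N : ℕ) * B ^ 2) := by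
            refine mul_le_mul_of_nonneg_left (mul_le_mul_of_nonneg_left hf2 (by positivity)) hM0
        _ = M * ((L:ℝ) + N) * B ^ 2 := by push_cast; ring
    calc (L:ℝ) * ∫ x, φ x ∂ν = ∑ m ∈ range L, ∫ x, φ (T^[m] x) ∂ν := h1
      _ = ∫ x, ∑ m ∈ range L, φ (T^[m] x) ∂ν := h2
      _ ≤ ∫ x, M * ∑ j ∈ range (L + N), ‖f (T^[j] x)‖ ^ 2 ∂ν := h3
      _ ≤ M * ((L:ℝ) + N) * B ^ 2 := h4
  -- pass to the limit L → ∞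
  have hev : ∀ᶠ L : ℕ in atTop, ∫ x, φ x ∂ν ≤ M * B ^ 2 * (1 + (N:ℝ) / L) := by
    filter_upwards [eventually_ge_atTop 1] with L hL
    have hL0 : (0:ℝ) < L := by exact_mod_cast hL
    have := key L
    rw [show M * ((L:ℝ) + N) * B ^ 2 = (L:ℝ) * (M * B ^ 2 * (1 + (N:ℝ) / L)) by
      field_simp] at this
    exact le_of_mul_le_mul_left this hL0
  have hlim : Tendsto (fun L : ℕ => M * B ^ 2 * (1 + (N:ℝ) / L)) atTop (nhds (M * B ^ 2 * (1 + 0))) := by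
    exact tendsto_const_nhds.mul (tendsto_const_nhds.add (tendsto_const_div_atTop_nhds_zero_nat (N:ℝ)))
  rw [show M * B ^ 2 * (1 + 0) = M * B ^ 2 by ring] at hlim
  exact ge_of_tendsto hlim hev

lemma det_lemma (a : ℕ → ℝ) (ha0 : ∀ n, 0 ≤ a n) (C : ℝ) (hC : 1 ≤ C)
    (hstep : ∀ n, a (n+1) ≤ a n + C)
    (hsum : Summable fun n : ℕ => (a (n+1))^2 / ((n:ℝ)+1)^3) :
    Tendsto (fun n : ℕ => a n / n) atTop (nhds 0) := by
  set u : ℕ → ℝ := fun n => (a (n+1))^2 / ((n:ℝ)+1)^3 with hu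
  have hu0 : ∀ n, 0 ≤ u n := fun n => div_nonneg (sq_nonneg _) (by positivity)
  have hchain : ∀ m d : ℕ, a (m + d) ≤ a m + C * d := by
    intro m d
    induction d with
    | zero => simp
    | succ d ih =>
      have h1 : a (m + (d+1)) ≤ a (m+d) + C := by
        rw [show m + (d+1) = (m+d)+1 by omega]
        exact hstep _
      push_cast
      linarith
  rw [Metric.tendsto_atTop]
  by_contra hcon
  push_neg at hcon
  obtain ⟨ε, hε, hfreq⟩ := hcon
  set ε₀ : ℝ := min ε 1 with hε₀
  have hε₀pos : 0 < ε₀ := lt_min hε one_pos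
  have hε₀C : ε₀ ≤ C := le_trans (min_le_right _ _) hC
  have hC0 : 0 < C := lt_of_lt_of_le one_pos hC
  set c₀ : ℝ := ε₀^3/(16*C) with hc₀
  have hc₀pos : 0 < c₀ := by positivity
  obtain ⟨A, hA⟩ : ∃ A : ℕ, ∀ n : ℕ, ∑ j ∈ Finset.Ico A n, u j < c₀ := by
    have htend : Tendsto (fun A : ℕ => ∑ j ∈ range A, u j) atTop (nhds (∑' j, u j)) :=
      hsum.hasSum.tendsto_sum_nat
    have hev : ∀ᶠ A : ℕ in atTop, (∑' j, u j) - c₀ < ∑ j ∈ range A, u j :=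
      htend.eventually (eventually_gt_nhds (by linarith))
    obtain ⟨A, hA⟩ := hev.exists
    refine ⟨A, fun n => ?_⟩
    by_cases hn : A ≤ n
    · have h1 : ∑ j ∈ Finset.Ico A n, u j = ∑ j ∈ range n, u j - ∑ j ∈ range A, u j := by
        rw [Finset.sum_Ico_eq_sub _ hn]
      have h2 : ∑ j ∈ range n, u j ≤ ∑' j, u j := Summable.sum_le_tsum _ (fun _ _ => hu0 _) hsum
      rw [h1]; linarith
    · rw [Finset.Ico_eq_empty (by omega)]
      simpa using hc₀pos
  set n₁ : ℕ := max (2*A) (max 1 (Nat.ceil (4*C/ε₀))) with hn₁def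
  obtain ⟨n, hn₁, hnd⟩ := hfreq n₁
  have hn1 : 1 ≤ n := le_trans (le_max_of_le_right (le_max_left _ _)) hn₁
  have h2A : 2*A ≤ n := le_trans (le_max_left _ _) hn₁
  have hnC : 4*C/ε₀ ≤ (n:ℝ) := by
    have h := le_trans (le_max_of_le_right (le_max_right _ _)) hn₁
    calc 4*C/ε₀ ≤ (Nat.ceil (4*C/ε₀) : ℝ) := Nat.le_ceil _
      _ ≤ (n:ℝ) := by exact_mod_cast h
  have hnpos : (0:ℝ) < n := by exact_mod_cast hn1
  have hna : ε₀ * n ≤ a n := by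
    have h1 : ε ≤ a n / n := by
      have := hnd
      rw [Real.dist_eq, sub_zero, abs_of_nonneg (div_nonneg (ha0 n) hnpos.le)] at this
      exact this
    have h2 : ε₀ ≤ a n / n := le_trans (min_le_left _ _) h1
    calc ε₀ * n ≤ (a n / n) * n := mul_le_mul_of_nonneg_right h2 hnpos.le
      _ = a n := by field_simp
  set K : ℕ := Nat.ceil (ε₀ * n / (4*C)) with hKdef
  have hKl : ε₀ * n / (4*C) ≤ (K:ℝ) := Nat.le_ceil _
  have hKgeone : (1:ℝ) ≤ ε₀ * n / (4*C) := by
    rw [le_div_iff₀ (by positivity)]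
    rw [div_le_iff₀ hε₀pos] at hnC
    linarith
  have hKu : (K:ℝ) ≤ ε₀ * n / (2*C) := by
    have h1 : (K:ℝ) < ε₀ * n / (4*C) + 1 := Nat.ceil_lt_add_one (by positivity)
    have h2 : ε₀ * n / (2*C) = 2 * (ε₀ * n / (4*C)) := by field_simp; ring
    linarith
  have hCK : C * K ≤ ε₀ * n / 2 := by
    calc C * K ≤ C * (ε₀ * n / (2*C)) := mul_le_mul_of_nonneg_left hKu hC0.le
      _ = ε₀ * n / 2 := by field_simp
  have h2K : 2*K ≤ n := by
    have : (K:ℝ) ≤ (n:ℝ)/2 := by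
      calc (K:ℝ) ≤ ε₀ * n / (2*C) := hKu
        _ ≤ C * n / (2*C) := by
            apply div_le_div_of_nonneg_right ?_ (by positivity)
            exact mul_le_mul_of_nonneg_right hε₀C hnpos.le
        _ = (n:ℝ)/2 := by field_simp
    have : (2*K : ℝ) ≤ (n:ℝ) := by linarith
    exact_mod_cast this
  have hK1 : 1 ≤ K := Nat.one_le_ceil_iff.mpr (by positivity)
  have hwin : ∀ j ∈ Finset.Ico (n - K) n, ε₀^2/(4*n) ≤ u j := by
    intro j hj
    rw [Finset.mem_Ico] at hj
    set m : ℕ := j + 1 with hm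
    have hmn : m ≤ n := by omega
    have hnm : n - m ≤ K := by omega
    have ham : ε₀ * n / 2 ≤ a m := by
      have h1 : a n ≤ a m + C * (n - m : ℕ) := by
        have := hchain m (n - m)
        rw [show m + (n - m) = n by omega] at this
        exact this
      have h2 : C * ((n - m : ℕ):ℝ) ≤ C * K := by
        apply mul_le_mul_of_nonneg_left _ hC0.le
        exact_mod_cast hnm
      linarith [hna]
    have hmpos : (0:ℝ) < m := by positivity
    have : u j = a m ^ 2 / (m:ℝ)^3 := by
      rw [hu]
      simp only [hm]
      push_cast
      ring_nf
    rw [this]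
    have hnum : (ε₀ * n / 2)^2 ≤ a m ^ 2 := by
      apply pow_le_pow_left₀ (by positivity) ham
    have hden : (m:ℝ)^3 ≤ (n:ℝ)^3 := by
      apply pow_le_pow_left₀ hmpos.le
      exact_mod_cast hmn
    calc ε₀^2/(4*n) = (ε₀ * n / 2)^2 / (n:ℝ)^3 := by field_simp; ring
      _ ≤ a m ^2 / (m:ℝ)^3 := div_le_div₀ (sq_nonneg _) hnum (by positivity) hden
  have hcard : (Finset.Ico (n - K) n).card = K := by
    rw [Nat.card_Ico]; omega
  have hsumlow : c₀ ≤ ∑ j ∈ Finset.Ico (n-K) n, u j := by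
    have h1 : ε₀ * n / (4*C) * (ε₀^2/(4*(n:ℝ))) = ε₀^3/(16*C) := by
      field_simp; ring
    have h2 : (K:ℝ) * (ε₀^2/(4*(n:ℝ))) ≥ ε₀^3/(16*C) := by
      rw [← h1]
      exact mul_le_mul_of_nonneg_right hKl (by positivity)
    have h3 : (Finset.Ico (n-K) n).card • (ε₀^2/(4*(n:ℝ))) ≤ ∑ j ∈ Finset.Ico (n-K) n, u j :=
      Finset.card_nsmul_le_sum _ _ _ hwin
    rw [hcard, nsmul_eq_mul] at h3
    rw [hc₀]
    linarith
  have hsub : Finset.Ico (n-K) n ⊆ Finset.Ico A n :=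
    Finset.Ico_subset_Ico (by omega) le_rfl
  have hle : ∑ j ∈ Finset.Ico (n-K) n, u j ≤ ∑ j ∈ Finset.Ico A n, u j :=
    Finset.sum_le_sum_of_subset_of_nonneg hsub (fun j _ _ => hu0 j)
  exact absurd (hA n) (not_lt.mpr (le_trans hsumlow hle))


/-- Weighted Birkhoff ergodic theorem under the DEL-condition, for `f ∈ L^∞`. -/
theorem weighted_birkhoff_DEL
    {X : Type*} [MeasurableSpace X] (ν : Measure X) [IsProbabilityMeasure ν]
    (T : X → X) (hT : MeasurePreserving T ν ν)
    (f : X → ℂ) (hf : Measurable f) (B : ℝ) (hfB : ∀ x, ‖f x‖ ≤ B)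
    (w : ℕ → ℂ) (hw : ∃ Bw : ℝ, ∀ n, ‖w n‖ ≤ Bw)
    (hDEL : Summable fun n : ℕ =>
      (⨆ t : Set.Icc (0 : ℝ) 1,
        ‖∑ k ∈ Finset.range (n + 1), w k * Complex.exp (2 * π * Complex.I * k * t.1)‖ ^ 2) /
      ((n : ℝ) + 1) ^ 3) :
    ∀ᵐ x ∂ν, Tendsto
      (fun N : ℕ => (N : ℂ)⁻¹ • ∑ n ∈ Finset.range N, w n * f (T^[n] x))
      atTop (nhds 0) := by
  classical
  obtain ⟨Bw, hBw⟩ := hw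
  have hXne : Nonempty X := by
    by_contra h
    rw [not_nonempty_iff] at h
    have h1 : ν Set.univ = 1 := measure_univ
    rw [Set.univ_eq_empty_iff.mpr h, measure_empty] at h1
    exact zero_ne_one h1
  have hB0 : 0 ≤ B := le_trans (norm_nonneg _) (hfB (Classical.choice hXne))
  have hBw0 : 0 ≤ Bw := le_trans (norm_nonneg _) (hBw 0)
  set S : ℕ → X → ℂ := fun N x => ∑ k ∈ range N, w k * f (T^[k] x) with hS
  set M : ℕ → ℝ := fun N => ⨆ t : Set.Icc (0:ℝ) 1,
      ‖∑ k ∈ range N, w k * Complex.exp (2 * π * Complex.I * k * t.1)‖ ^ 2 with hM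
  have hIb : ∀ N, ∫ x, ‖S N x‖ ^ 2 ∂ν ≤ M N * B ^ 2 := fun N =>
    spectral_bound ν T hT f hf B hB0 hfB w N (M N) (sup_bound w N)
  have hSmeas : ∀ N, Measurable fun x => S N x :=
    fun N => Finset.measurable_sum _ fun k _ =>
      measurable_const.mul (hf.comp (hT.iterate k).measurable)
  have hSbd : ∀ N x, ‖S N x‖ ≤ ∑ k ∈ range N, ‖w k‖ * B := by
    intro N x
    refine (norm_sum_le _ _).trans (Finset.sum_le_sum fun k _ => ?_)
    rw [norm_mul]
    exact mul_le_mul_of_nonneg_left (hfB _) (norm_nonneg _)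
  set Fn : ℕ → X → ℝ := fun n x => ‖S (n+1) x‖ ^ 2 / ((n:ℝ)+1)^3 with hFn
  have hFn0 : ∀ n x, 0 ≤ Fn n x := fun n x => div_nonneg (sq_nonneg _) (by positivity)
  have hFnmeas : ∀ n, Measurable (Fn n) := fun n =>
    ((hSmeas (n+1)).norm.pow_const 2).div_const _
  have hFnint : ∀ n, Integrable (Fn n) ν := by
    intro n
    refine Integrable.mono' (integrable_const ((∑ k ∈ range (n+1), ‖w k‖ * B) ^ 2 / ((n:ℝ)+1)^3))
      (hFnmeas n).aestronglyMeasurable (ae_of_all _ fun x => ?_)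
    rw [Real.norm_eq_abs, abs_of_nonneg (hFn0 n x)]
    exact div_le_div_of_nonneg_right (pow_le_pow_left₀ (norm_nonneg _) (hSbd (n+1) x) 2) (by positivity)
  have hFnIb : ∀ n, ∫ x, Fn n x ∂ν ≤ M (n+1) / ((n:ℝ)+1)^3 * B^2 := by
    intro n
    rw [hFn]
    simp only
    rw [integral_div, div_mul_eq_mul_div]
    exact div_le_div_of_nonneg_right (hIb (n+1)) (by positivity)
  -- a.e. summability
  have hae : ∀ᵐ x ∂ν, Summable fun n => Fn n x := by
    set G : ℕ → X → ENNReal := fun n x => ENNReal.ofReal (Fn n x) with hG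
    have hGmeas : ∀ n, Measurable (G n) := fun n => (hFnmeas n).ennreal_ofReal
    have hbig : ∫⁻ x, ∑' n, G n x ∂ν < ⊤ := by
      rw [lintegral_tsum fun n => (hGmeas n).aemeasurable]
      have h1 : ∀ n, ∫⁻ x, G n x ∂ν ≤ ENNReal.ofReal (M (n+1) / ((n:ℝ)+1)^3 * B^2) := by
        intro n
        rw [hG]
        simp only
        rw [← ofReal_integral_eq_lintegral_ofReal (hFnint n) (ae_of_all _ (hFn0 n))]
        exact ENNReal.ofReal_le_ofReal (hFnIb n)
      calc ∑' n, ∫⁻ x, G n x ∂ν ≤ ∑' n, ENNReal.ofReal (M (n+1) / ((n:ℝ)+1)^3 * B^2) :=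
            ENNReal.tsum_le_tsum h1
        _ = ENNReal.ofReal (∑' n, M (n+1) / ((n:ℝ)+1)^3 * B^2) := by
            rw [ENNReal.ofReal_tsum_of_nonneg]
            · intro n
              have : 0 ≤ M (n+1) := le_trans (sq_nonneg _) (sup_bound w (n+1) 0)
              positivity
            · exact hDEL.mul_right _
        _ < ⊤ := ENNReal.ofReal_lt_top
    have hmeas2 : Measurable fun x => ∑' n, G n x := by
      exact Measurable.ennreal_tsum hGmeas
    filter_upwards [ae_lt_top hmeas2 hbig.ne] with x hx
    have h2 : Summable fun n => (G n x).toReal := ENNReal.summable_toReal hx.ne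
    refine h2.congr fun n => ?_
    rw [hG]
    simp only
    rw [ENNReal.toReal_ofReal (hFn0 n x)]
  -- conclude pointwise
  filter_upwards [hae] with x hx
  have hdet : Tendsto (fun n : ℕ => ‖S n x‖ / n) atTop (nhds 0) := by
    refine det_lemma (fun n => ‖S n x‖) (fun n => norm_nonneg _) (Bw * B + 1)
      (by nlinarith) ?_ ?_
    · intro n
      rw [hS]
      simp only
      rw [Finset.sum_range_succ]
      refine (norm_add_le _ _).trans ?_
      have : ‖w n * f (T^[n] x)‖ ≤ Bw * B := by
        rw [norm_mul]
        exact mul_le_mul (hBw n) (hfB _) (norm_nonneg _) hBw0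
      linarith
    · exact hx
  have hnorm : (fun N : ℕ => ‖(N : ℂ)⁻¹ • S N x‖) = fun N : ℕ => ‖S N x‖ / N := by
    funext N
    rw [norm_smul, norm_inv, Complex.norm_natCast, div_eq_inv_mul]
  rw [tendsto_zero_iff_norm_tendsto_zero, hnorm]
  exact hdet
end
end

section
/- Let q ≥ 2 and f: ℕ → 𝕌 be q-multiplicative. Suppose there exist C ≥ 1 and 1/2 ≤ β < 1 such that max_{x∈ℝ} |∑_{n=0}^{N-1} f(n) e^{2πi n x}| ≤ C N^β for all N ≥ 1. Then there exists D > 0 such that for all integers 0 ≤ M ≤ N and all x ∈ ℝ, |∑_{n=M}^{N-1} f(n) e^{2πi n x}| ≤ D (N−M)^β. -/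
open Finset Real

/-- A function `f : ℕ → ℂ` is `q`-multiplicative. -/
def QMultiplicative (q : ℕ) (f : ℕ → ℂ) : Prop :=
  ∀ m a b : ℕ, 1 ≤ m → b < q ^ m → f (a * q ^ m + b) = f (a * q ^ m) * f b

/-- For `q`-multiplicative unimodular sequences, the Gelfond property implies
the strong Gelfond property. -/
theorem gelfond_implies_strong_gelfond (q : ℕ) (hq : 2 ≤ q) (f : ℕ → ℂ)
    (hf : QMultiplicative q f) (hmod : ∀ n, ‖f n‖ = 1)
    (C β : ℝ) (hC : 1 ≤ C) (hβ : 1 / 2 ≤ β) (hβ1 : β < 1)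
    (hgel : ∀ N : ℕ, 1 ≤ N → ∀ x : ℝ,
      ‖∑ n ∈ Finset.range N, f n * Complex.exp (2 * π * Complex.I * n * x)‖ ≤
        C * (N : ℝ) ^ β) :
    ∃ D : ℝ, 0 < D ∧ ∀ M N : ℕ, M ≤ N → ∀ x : ℝ,
      ‖∑ n ∈ Finset.Ico M N, f n * Complex.exp (2 * π * Complex.I * n * x)‖ ≤
        D * ((N : ℝ) - M) ^ β := by
  have hC0 : 0 < C := lt_of_lt_of_le one_pos hC
  refine ⟨((q : ℝ) + 3) * C, by positivity, ?_⟩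
  intro M N hMN x
  set E : ℕ → ℂ := fun n => f n * Complex.exp (2 * π * Complex.I * n * x) with hE
  have hexp : ∀ n : ℕ, ‖Complex.exp (2 * π * Complex.I * n * x)‖ = 1 := by
    intro n
    have h : (2 * (π : ℂ) * Complex.I * n * x) = ((2 * π * n * x : ℝ) : ℂ) * Complex.I := by
      push_cast; ring
    rw [h, Complex.norm_exp_ofReal_mul_I]
  have hEnorm : ∀ n, ‖E n‖ = 1 := by
    intro n
    rw [hE]
    simp only [norm_mul, hmod n, hexp n, one_mul]
  -- initial segment bound
  have hA : ∀ v : ℕ, ‖∑ n ∈ Finset.range v, E n‖ ≤ C * (v : ℝ) ^ β := by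
    intro v
    rcases Nat.eq_zero_or_pos v with rfl | hv
    · simp [Real.zero_rpow (show β ≠ 0 by positivity)]
    · exact hgel v hv x
  have hβ0 : (0 : ℝ) ≤ β := by linarith
  -- general Ico bound from initial segments
  have hB : ∀ u v : ℕ, u ≤ v → ‖∑ n ∈ Finset.Ico u v, E n‖ ≤ 2 * C * (v : ℝ) ^ β := by
    intro u v huv
    rw [Finset.sum_Ico_eq_sub _ huv]
    have h1 := hA v
    have h2 := hA u
    have h3 : (u : ℝ) ^ β ≤ (v : ℝ) ^ β :=
      Real.rpow_le_rpow (by positivity) (by exact_mod_cast huv) hβ0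
    have h4 := norm_sub_le (∑ n ∈ Finset.range v, E n) (∑ n ∈ Finset.range u, E n)
    nlinarith
  -- block translation invariance
  have hCC : ∀ (a m u v : ℕ), 1 ≤ m → v ≤ q ^ m →
      ‖∑ n ∈ Finset.Ico (a * q ^ m + u) (a * q ^ m + v), E n‖ =
        ‖∑ n ∈ Finset.Ico u v, E n‖ := by
    intro a m u v hm hv
    have hmap : Finset.Ico (a * q ^ m + u) (a * q ^ m + v) =
        (Finset.Ico u v).map (addLeftEmbedding (a * q ^ m)) := by
      rw [Finset.map_add_left_Ico]
    rw [hmap, Finset.sum_map]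
    have hterm : ∀ b ∈ Finset.Ico u v, E ((addLeftEmbedding (a * q ^ m)) b) =
        (f (a * q ^ m) * Complex.exp (2 * π * Complex.I * ((a * q ^ m : ℕ) : ℂ) * x)) * E b := by
      intro b hb
      have hb' : b < q ^ m := lt_of_lt_of_le (Finset.mem_Ico.mp hb).2 hv
      have h1 : f (a * q ^ m + b) = f (a * q ^ m) * f b := hf m a b hm hb'
      have h2 : Complex.exp (2 * π * Complex.I * ((a * q ^ m + b : ℕ) : ℂ) * x) =
          Complex.exp (2 * π * Complex.I * ((a * q ^ m : ℕ) : ℂ) * x) *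
            Complex.exp (2 * π * Complex.I * (b : ℂ) * x) := by
        rw [← Complex.exp_add]
        congr 1
        push_cast
        ring
      simp only [hE, addLeftEmbedding_apply]
      rw [h1, h2]
      ring
    rw [Finset.sum_congr rfl hterm, ← Finset.mul_sum, norm_mul, norm_mul,
      hmod (a * q ^ m), hexp (a * q ^ m), one_mul, one_mul]
  -- left-aligned block
  have hCC0 : ∀ (a m v : ℕ), 1 ≤ m → v ≤ q ^ m →
      ‖∑ n ∈ Finset.Ico (a * q ^ m) (a * q ^ m + v), E n‖ =
        ‖∑ n ∈ Finset.range v, E n‖ := by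
    intro a m v hm hv
    have h := hCC a m 0 v hm hv
    rw [Nat.add_zero] at h
    rw [h, Finset.range_eq_Ico]
  -- sums over consecutive full blocks
  have hMid : ∀ (m : ℕ), 1 ≤ m → ∀ (d c : ℕ),
      ‖∑ n ∈ Finset.Ico (c * q ^ m) ((c + d) * q ^ m), E n‖ ≤
        (d : ℝ) * (C * ((q ^ m : ℕ) : ℝ) ^ β) := by
    intro m hm d
    induction d with
    | zero => intro c; simp
    | succ d ih =>
      intro c
      have h1 : c * q ^ m ≤ (c + d) * q ^ m := Nat.mul_le_mul_right _ (by omega)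
      have h2 : (c + d) * q ^ m ≤ (c + (d + 1)) * q ^ m := Nat.mul_le_mul_right _ (by omega)
      have hsplit := Finset.sum_Ico_consecutive E h1 h2
      have hblock : ‖∑ n ∈ Finset.Ico ((c + d) * q ^ m) ((c + (d + 1)) * q ^ m), E n‖ ≤
          C * ((q ^ m : ℕ) : ℝ) ^ β := by
        rw [show (c + (d + 1)) * q ^ m = (c + d) * q ^ m + q ^ m from by ring,
          hCC0 (c + d) m (q ^ m) hm le_rfl]
        exact hA (q ^ m)
      have h3 := ih c
      have h4 := norm_add_le (∑ n ∈ Finset.Ico (c * q ^ m) ((c + d) * q ^ m), E n)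
        (∑ n ∈ Finset.Ico ((c + d) * q ^ m) ((c + (d + 1)) * q ^ m), E n)
      rw [hsplit] at h4
      rw [Nat.cast_succ]
      calc ‖∑ n ∈ Finset.Ico (c * q ^ m) ((c + (d + 1)) * q ^ m), E n‖ ≤ _ := h4
        _ ≤ (d : ℝ) * (C * ((q ^ m : ℕ) : ℝ) ^ β) + C * ((q ^ m : ℕ) : ℝ) ^ β :=
            add_le_add h3 hblock
        _ = ((d : ℝ) + 1) * (C * ((q ^ m : ℕ) : ℝ) ^ β) := by ring
  -- rewrite the target in terms of L := N - M
  have hcast : ((N : ℝ) - M) = ((N - M : ℕ) : ℝ) := by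
    rw [Nat.cast_sub hMN]
  rw [hcast]
  set L := N - M with hL
  by_cases hLq : L < q
  · -- short interval: trivial bound
    have hnorm : ‖∑ n ∈ Finset.Ico M N, E n‖ ≤ (L : ℝ) := by
      calc ‖∑ n ∈ Finset.Ico M N, E n‖ ≤ ∑ n ∈ Finset.Ico M N, ‖E n‖ := norm_sum_le _ _
        _ = (L : ℝ) := by
            rw [Finset.sum_congr rfl fun n _ => hEnorm n]
            simp [hL]
    rcases Nat.eq_zero_or_pos L with hL0 | hL1
    · have hNM : N = M := by omega
      subst hNM
      simp only [Finset.Ico_self, Finset.sum_empty, norm_zero]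
      positivity
    · have hL1' : (1 : ℝ) ≤ (L : ℝ) := by exact_mod_cast hL1
      have hq1' : (1 : ℝ) ≤ (q : ℝ) := by exact_mod_cast (by omega : 1 ≤ q)
      have e1 : (L : ℝ) ^ β * (L : ℝ) ^ (1 - β) = (L : ℝ) := by
        rw [← Real.rpow_add (by linarith) β (1 - β), show β + (1 - β) = 1 by ring,
          Real.rpow_one]
      have e2 : (L : ℝ) ^ (1 - β) ≤ (q : ℝ) := by
        calc (L : ℝ) ^ (1 - β) ≤ (q : ℝ) ^ (1 - β) :=
              Real.rpow_le_rpow (by positivity)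
                (by exact_mod_cast le_of_lt hLq) (by linarith)
          _ ≤ (q : ℝ) ^ (1 : ℝ) :=
              Real.rpow_le_rpow_of_exponent_le hq1' (by linarith)
          _ = (q : ℝ) := Real.rpow_one _
      have hpow0 : (0 : ℝ) < (L : ℝ) ^ β := Real.rpow_pos_of_pos (by linarith) β
      have s2 : (q : ℝ) ≤ ((q : ℝ) + 3) * C := by nlinarith
      have key : (L : ℝ) ≤ ((q : ℝ) + 3) * C * (L : ℝ) ^ β := by
        calc (L : ℝ) = (L : ℝ) ^ β * (L : ℝ) ^ (1 - β) := e1.symm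
          _ ≤ (L : ℝ) ^ β * (q : ℝ) := mul_le_mul_of_nonneg_left e2 hpow0.le
          _ ≤ (L : ℝ) ^ β * (((q : ℝ) + 3) * C) := mul_le_mul_of_nonneg_left s2 hpow0.le
          _ = ((q : ℝ) + 3) * C * (L : ℝ) ^ β := by ring
      linarith
  · -- long interval: q-adic decomposition
    push_neg at hLq
    have hq1 : 1 < q := hq
    have hL0 : L ≠ 0 := by omega
    set j := Nat.log q L with hj
    have hj1 : 1 ≤ j := Nat.log_pos hq1 hLq
    have hPle : q ^ j ≤ L := Nat.pow_log_le_self q hL0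
    have hLlt : L < q ^ (j + 1) := Nat.lt_pow_succ_log_self hq1 L
    set P := q ^ j with hPdef
    have hP0 : 0 < P := Nat.pow_pos (n := j) (by omega)
    -- specialized block lemmas
    have hCCP : ∀ (a u v : ℕ), v ≤ P →
        ‖∑ n ∈ Finset.Ico (a * P + u) (a * P + v), E n‖ = ‖∑ n ∈ Finset.Ico u v, E n‖ := by
      intro a u v hv
      rw [hPdef] at hv ⊢
      exact hCC a j u v hj1 hv
    have hCCP0 : ∀ (a v : ℕ), v ≤ P →
        ‖∑ n ∈ Finset.Ico (a * P) (a * P + v), E n‖ = ‖∑ n ∈ Finset.range v, E n‖ := by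
      intro a v hv
      rw [hPdef] at hv ⊢
      exact hCC0 a j v hj1 hv
    have hMidP : ∀ (d c : ℕ),
        ‖∑ n ∈ Finset.Ico (c * P) ((c + d) * P), E n‖ ≤ (d : ℝ) * (C * ((P : ℕ) : ℝ) ^ β) := by
      intro d c
      rw [hPdef]
      exact hMid j hj1 d c
    set a := M / P with ha
    set b := N / P with hb
    have hab : a ≤ b := Nat.div_le_div_right hMN
    have hMsplit : a * P + M % P = M := Nat.div_add_mod' M P
    have hNsplit : b * P + N % P = N := Nat.div_add_mod' N P
    have hmM : M % P < P := Nat.mod_lt _ hP0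
    have hmN : N % P < P := Nat.mod_lt _ hP0
    have hPβ : ((P : ℕ) : ℝ) ^ β ≤ (L : ℝ) ^ β :=
      Real.rpow_le_rpow (by positivity) (by exact_mod_cast hPle) hβ0
    have hPβ0 : (0 : ℝ) ≤ ((P : ℕ) : ℝ) ^ β := by positivity
    have hLβ0 : (0 : ℝ) ≤ (L : ℝ) ^ β := by positivity
    have hq2 : (2 : ℝ) ≤ (q : ℝ) := by exact_mod_cast hq
    have hqC : (0 : ℝ) ≤ (q : ℝ) * C := by positivity
    rcases eq_or_lt_of_le hab with hab' | hab'
    · -- M and N in the same block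
      have hMeq : M = a * P + M % P := hMsplit.symm
      have hNeq : N = a * P + N % P := by rw [hab']; exact hNsplit.symm
      have huv : M % P ≤ N % P := by
        have h := hMN
        rw [hMeq, hNeq] at h
        omega
      rw [hMeq, hNeq, hCCP a (M % P) (N % P) (le_of_lt hmN)]
      have h1 := hB (M % P) (N % P) huv
      have h2 : ((N % P : ℕ) : ℝ) ^ β ≤ ((P : ℕ) : ℝ) ^ β :=
        Real.rpow_le_rpow (by positivity) (by exact_mod_cast le_of_lt hmN) hβ0
      calc ‖∑ n ∈ Finset.Ico (M % P) (N % P), E n‖ ≤ 2 * C * ((N % P : ℕ) : ℝ) ^ β := h1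
        _ ≤ 2 * C * ((P : ℕ) : ℝ) ^ β := mul_le_mul_of_nonneg_left h2 (by positivity)
        _ ≤ 2 * C * (L : ℝ) ^ β := mul_le_mul_of_nonneg_left hPβ (by positivity)
        _ ≤ ((q : ℝ) + 3) * C * (L : ℝ) ^ β :=
            mul_le_mul_of_nonneg_right (by nlinarith) hLβ0
    · -- M and N in different blocks
      have h1 : M ≤ (a + 1) * P := by
        have h : M < (a + 1) * P := by
          calc M = a * P + M % P := hMsplit.symm
            _ < a * P + P := by omega
            _ = (a + 1) * P := by ring
        omega
      have h2 : (a + 1) * P ≤ b * P := Nat.mul_le_mul_right _ hab'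
      have h3 : b * P ≤ N := by
        calc b * P ≤ b * P + N % P := Nat.le_add_right _ _
          _ = N := hNsplit
      have e2 := Finset.sum_Ico_consecutive E h2 h3
      have e1 := Finset.sum_Ico_consecutive E h1 (h2.trans h3)
      rw [← e1, ← e2]
      -- S1 bound
      have hS1 : ‖∑ n ∈ Finset.Ico M ((a + 1) * P), E n‖ ≤ 2 * C * ((P : ℕ) : ℝ) ^ β := by
        rw [show (a + 1) * P = a * P + P from by ring]
        nth_rewrite 1 [hMsplit.symm]
        rw [hCCP a (M % P) P le_rfl]
        exact hB (M % P) P (le_of_lt hmM)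
      -- S3 bound
      have hS3 : ‖∑ n ∈ Finset.Ico (b * P) N, E n‖ ≤ C * ((P : ℕ) : ℝ) ^ β := by
        have h := hCCP0 b (N % P) (le_of_lt hmN)
        rw [hNsplit] at h
        rw [h]
        have hh := hA (N % P)
        have h2 : ((N % P : ℕ) : ℝ) ^ β ≤ ((P : ℕ) : ℝ) ^ β :=
          Real.rpow_le_rpow (by positivity) (by exact_mod_cast le_of_lt hmN) hβ0
        calc ‖∑ n ∈ Finset.range (N % P), E n‖ ≤ C * ((N % P : ℕ) : ℝ) ^ β := hh
          _ ≤ C * ((P : ℕ) : ℝ) ^ β := mul_le_mul_of_nonneg_left h2 hC0.le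
      -- S2 bound
      set d := b - (a + 1) with hd
      have hdb : (a + 1) + d = b := by omega
      have hS2' := hMidP d (a + 1)
      rw [hdb] at hS2'
      have hdP : d * P ≤ L := by
        have hk : d * P + (a + 1) * P = b * P := by
          rw [← Nat.add_mul]
          congr 1
          omega
        have hdn : d * P + M ≤ N := by
          calc d * P + M ≤ d * P + (a + 1) * P := by omega
            _ = b * P := hk
            _ ≤ N := h3
        omega
      have hdq : d < q := by
        have hlt : d * P < q * P := by
          calc d * P ≤ L := hdP
            _ < q ^ (j + 1) := hLlt
            _ = q * P := by rw [hPdef, pow_succ]; ring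
        exact Nat.lt_of_mul_lt_mul_right
          (by rwa [Nat.mul_comm d P, Nat.mul_comm q P] at hlt)
      have hdq' : (d : ℝ) ≤ (q : ℝ) - 1 := by
        have h : (d : ℝ) + 1 ≤ (q : ℝ) := by exact_mod_cast hdq
        linarith
      have hS2 : ‖∑ n ∈ Finset.Ico ((a + 1) * P) (b * P), E n‖ ≤
          ((q : ℝ) - 1) * (C * ((P : ℕ) : ℝ) ^ β) :=
        le_trans hS2' (mul_le_mul_of_nonneg_right hdq' (by positivity))
      -- combine
      have htri : ‖(∑ n ∈ Finset.Ico M ((a + 1) * P), E n) +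
          ((∑ n ∈ Finset.Ico ((a + 1) * P) (b * P), E n) +
            ∑ n ∈ Finset.Ico (b * P) N, E n)‖ ≤
          ‖∑ n ∈ Finset.Ico M ((a + 1) * P), E n‖ +
            (‖∑ n ∈ Finset.Ico ((a + 1) * P) (b * P), E n‖ +
              ‖∑ n ∈ Finset.Ico (b * P) N, E n‖) := by
        refine le_trans (norm_add_le _ _) ?_
        have h := norm_add_le (∑ n ∈ Finset.Ico ((a + 1) * P) (b * P), E n)
          (∑ n ∈ Finset.Ico (b * P) N, E n)
        linarith
      have hstep : ((q : ℝ) + 2) * (C * ((P : ℕ) : ℝ) ^ β) ≤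
          ((q : ℝ) + 3) * C * (L : ℝ) ^ β := by
        calc ((q : ℝ) + 2) * (C * ((P : ℕ) : ℝ) ^ β) ≤
            ((q : ℝ) + 2) * (C * (L : ℝ) ^ β) := by
              refine mul_le_mul_of_nonneg_left ?_ (by linarith)
              exact mul_le_mul_of_nonneg_left hPβ hC0.le
          _ ≤ ((q : ℝ) + 3) * (C * (L : ℝ) ^ β) := by
              refine mul_le_mul_of_nonneg_right (by linarith) (by positivity)
          _ = ((q : ℝ) + 3) * C * (L : ℝ) ^ β := by ring
      have hsum : ‖∑ n ∈ Finset.Ico M ((a + 1) * P), E n‖ +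
          (‖∑ n ∈ Finset.Ico ((a + 1) * P) (b * P), E n‖ +
            ‖∑ n ∈ Finset.Ico (b * P) N, E n‖) ≤
          ((q : ℝ) + 2) * (C * ((P : ℕ) : ℝ) ^ β) := by
        have e : 2 * C * ((P : ℕ) : ℝ) ^ β +
            (((q : ℝ) - 1) * (C * ((P : ℕ) : ℝ) ^ β) + C * ((P : ℕ) : ℝ) ^ β) =
            ((q : ℝ) + 2) * (C * ((P : ℕ) : ℝ) ^ β) := by ring
        linarith [hS1, hS2, hS3]
      linarith [htri, hsum, hstep]
end

section
/- Let t_n = (−1)^{s₂(n)} be the Thue–Morse sequence. For all N ≥ 1 and x ∈ ℝ, |∑_{n=0}^{N-1} t_n e^{2πi n x}| ≤ C N^{log 3 / log 4} for some absolute constant C > 0. -/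
open Finset Real

noncomputable section GTMaux

def tm (n : ℕ) : ℂ := (-1 : ℂ) ^ (Nat.digits 2 n).sum
def ee (y : ℝ) : ℂ := Complex.exp (2 * π * Complex.I * y)
def F (N : ℕ) (x : ℝ) : ℂ := ∑ n ∈ Finset.range N, tm n * ee (n * x)
def P (k : ℕ) (x : ℝ) : ℝ := ∏ i ∈ Finset.range k, (2 * |Real.sin (2 ^ i * π * x)|)

lemma norm_one_sub_ee (y : ℝ) : ‖1 - ee y‖ = 2 * |Real.sin (π * y)| := by
  have hform : ee y = Complex.cos (2 * π * y) + Complex.sin (2 * π * y) * Complex.I := by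
    rw [ee, ← Complex.exp_mul_I]
    congr 1
    push_cast
    ring
  have hre : (1 - ee y) = Complex.ofReal (1 - Real.cos (2 * π * y)) +
      Complex.ofReal (- Real.sin (2 * π * y)) * Complex.I := by
    have harg : (2 * (π:ℂ) * (y:ℂ)) = ((2 * π * y : ℝ) : ℂ) := by push_cast; ring
    rw [hform, harg, ← Complex.ofReal_cos, ← Complex.ofReal_sin]
    push_cast
    ring
  have hsq : ‖1 - ee y‖ ^ 2 = (2 * |Real.sin (π * y)|) ^ 2 := by
    rw [hre, Complex.sq_norm, Complex.normSq_add_mul_I]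
    have h1 := Real.sin_sq_add_cos_sq (π * y)
    have h2 : Real.cos (2 * (π * y)) = 2 * Real.cos (π * y) ^ 2 - 1 := Real.cos_two_mul _
    have h3 : (2 : ℝ) * π * y = 2 * (π * y) := by ring
    have h4 : |Real.sin (π * y)| ^ 2 = Real.sin (π * y) ^ 2 := sq_abs _
    have h5 := Real.sin_two_mul (π * y)
    have h6 : (2 * |Real.sin (π * y)|) ^ 2 = 4 * Real.sin (π * y) ^ 2 := by
      rw [mul_pow, sq_abs]; ring
    rw [h3, h2, h5, h6]
    linear_combination (4 * (Real.cos (π * y) ^ 2 - 1)) * h1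
  have h5 : 0 ≤ ‖1 - ee y‖ := norm_nonneg _
  have h6 : (0:ℝ) ≤ 2 * |Real.sin (π * y)| := by positivity
  nlinarith [hsq, h5, h6]

lemma F_succ (N : ℕ) (x : ℝ) : F (N + 1) x = F N x + tm N * ee (N * x) :=
  Finset.sum_range_succ _ _

lemma tm_even (n : ℕ) : tm (2 * n) = tm n := by
  rcases Nat.eq_zero_or_pos n with h | h
  · simp [h]
  · unfold tm
    rw [Nat.digits_def' (by norm_num : 1 < 2) (by omega)]
    have h1 : 2 * n % 2 = 0 := by omega
    have h2 : 2 * n / 2 = n := by omega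
    rw [h1, h2, List.sum_cons, Nat.zero_add]

lemma tm_odd (n : ℕ) : tm (2 * n + 1) = - tm n := by
  unfold tm
  rw [Nat.digits_def' (by norm_num : 1 < 2) (by omega)]
  have h1 : (2 * n + 1) % 2 = 1 := by omega
  have h2 : (2 * n + 1) / 2 = n := by omega
  rw [h1, h2, List.sum_cons, pow_add, pow_one]
  ring

lemma ee_add (a b : ℝ) : ee (a + b) = ee a * ee b := by
  rw [ee, ee, ee, ← Complex.exp_add]
  congr 1
  push_cast
  ring

lemma F_even (M : ℕ) (x : ℝ) : F (2 * M) x = (1 - ee x) * F M (2 * x) := by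
  induction M with
  | zero => simp [F]
  | succ M ih =>
    have h1 : 2 * (M + 1) = 2 * M + 1 + 1 := by ring
    rw [h1, F_succ, F_succ, ih, F_succ, tm_odd, tm_even]
    have e1 : ((2 * M : ℕ) : ℝ) * x = (M : ℝ) * (2 * x) := by push_cast; ring
    have e2 : ((2 * M + 1 : ℕ) : ℝ) * x = (M : ℝ) * (2 * x) + x := by push_cast; ring
    rw [e1, e2, ee_add]
    ring

lemma norm_tm (n : ℕ) : ‖tm n‖ = 1 := by simp [tm]

lemma norm_ee (y : ℝ) : ‖ee y‖ = 1 := by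
  rw [ee, Complex.norm_exp]
  norm_num [Complex.mul_re, Complex.mul_im]

lemma norm_F_step (N : ℕ) (x : ℝ) :
    ‖F N x‖ ≤ ‖1 - ee x‖ * ‖F (N / 2) (2 * x)‖ + 1 := by
  rcases Nat.even_or_odd N with ⟨m, hm⟩ | ⟨m, hm⟩
  · have hm' : N = 2 * m := by omega
    have hd : N / 2 = m := by omega
    rw [hd, hm', F_even, norm_mul]
    nlinarith [norm_nonneg ((1 - ee x) * F m (2*x))]
  · have hm' : N = 2 * m + 1 := by omega
    have hd : N / 2 = m := by omega
    rw [hd, hm', F_succ]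
    calc ‖F (2*m) x + tm (2*m) * ee ((2*m : ℕ) * x)‖
        ≤ ‖F (2*m) x‖ + ‖tm (2*m) * ee ((2*m : ℕ) * x)‖ := norm_add_le _ _
      _ = ‖1 - ee x‖ * ‖F m (2*x)‖ + 1 := by
          rw [F_even, norm_mul, norm_mul, norm_tm, norm_ee, one_mul]

lemma P_zero (x : ℝ) : P 0 x = 1 := by simp [P]

lemma P_nonneg (k : ℕ) (x : ℝ) : 0 ≤ P k x :=
  Finset.prod_nonneg fun i _ => by positivity

lemma P_succ' (k : ℕ) (x : ℝ) :
    P (k + 1) x = (2 * |Real.sin (π * x)|) * P k (2 * x) := by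
  rw [P, Finset.prod_range_succ', P]
  have h0 : (2:ℝ) ^ (0:ℕ) * π * x = π * x := by norm_num
  rw [h0, mul_comm]
  congr 1
  apply Finset.prod_congr rfl
  intro i _
  have : (2:ℝ) ^ (i+1) * π * x = 2 ^ i * π * (2 * x) := by ring
  rw [this]

lemma norm_F_le_sumP : ∀ k N : ℕ, N ≤ 2 ^ k → ∀ x : ℝ,
    ‖F N x‖ ≤ ∑ j ∈ Finset.range (k + 1), P j x := by
  intro k
  induction k with
  | zero =>
    intro N hN x
    interval_cases N
    · simp [F, P]
    · have : F 1 x = 1 := by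
        rw [F]
        simp [tm, ee]
      rw [this]
      simp [P]
  | succ k ih =>
    intro N hN x
    have hdiv : N / 2 ≤ 2 ^ k := by
      rw [pow_succ] at hN
      omega
    calc ‖F N x‖ ≤ ‖1 - ee x‖ * ‖F (N / 2) (2 * x)‖ + 1 := norm_F_step N x
      _ ≤ ‖1 - ee x‖ * (∑ j ∈ Finset.range (k + 1), P j (2 * x)) + 1 := by
          gcongr
          exact ih (N / 2) hdiv (2 * x)
      _ = ∑ j ∈ Finset.range (k + 2), P j x := by
          rw [Finset.sum_range_succ' (fun j => P j x) (k + 1), norm_one_sub_ee,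
            Finset.mul_sum, P_zero]
          congr 1
          apply Finset.sum_congr rfl
          intro j _
          rw [P_succ']

lemma trig_key (v : ℝ) : (2 * |Real.sin v|) ^ 4 * (2 * |Real.sin (2 * v)|) ^ 2 ≤ 27 := by
  have h1 := Real.sin_sq_add_cos_sq v
  have h2 := Real.sin_two_mul v
  have e4 : |Real.sin v| ^ 4 = Real.sin v ^ 4 := by
    rw [show (4:ℕ) = 2 * 2 from rfl, pow_mul, sq_abs, ← pow_mul]
  have e2 : |Real.sin (2 * v)| ^ 2 = Real.sin (2 * v) ^ 2 := sq_abs _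
  rw [mul_pow, mul_pow, e4, e2, h2]
  nlinarith [sq_nonneg (4 * Real.sin v ^ 2 - 3), sq_nonneg (Real.sin v),
    sq_nonneg (Real.cos v), sq_nonneg (Real.sin v * Real.cos v),
    sq_nonneg (Real.sin v ^ 2 * Real.cos v), sq_nonneg (Real.sin v ^ 3 * Real.cos v), h1,
    mul_nonneg (sq_nonneg (Real.sin v * (4 * Real.sin v ^ 2 - 3))) (sq_nonneg (Real.cos v))]

lemma myAbsSin (v : ℝ) : |Real.sin v| ≤ 1 :=
  abs_le.mpr ⟨Real.neg_one_le_sin v, Real.sin_le_one v⟩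

lemma prod6 : ∀ k : ℕ, 1 ≤ k → ∀ x : ℝ,
    (P k x) ^ 6 ≤ 3 ^ (3 * k) * (2 * |Real.sin (π * x)|) ^ 2 := by
  intro k hk
  induction k, hk using Nat.le_induction with
  | base =>
    intro x
    have hP : P 1 x = 2 * |Real.sin (π * x)| := by
      rw [P]
      simp
    rw [hP]
    have h := myAbsSin (π * x)
    have h0 := abs_nonneg (Real.sin (π * x))
    norm_num
    nlinarith [mul_le_mul_of_nonneg_right (pow_le_one₀ (n := 4) h0 h) (sq_nonneg |Real.sin (π * x)|), sq_nonneg |Real.sin (π * x)|]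
  | succ k hk ih =>
    intro x
    have hstep : P (k + 1) x = (2 * |Real.sin (π * x)|) * P k (2 * x) := P_succ' k x
    have hIH := ih (2 * x)
    have harg : π * (2 * x) = 2 * (π * x) := by ring
    rw [harg] at hIH
    have hkey := trig_key (π * x)
    have hPn := P_nonneg k (2 * x)
    have ha : (0:ℝ) ≤ 2 * |Real.sin (π * x)| := by positivity
    have h3 : (0:ℝ) < 3 ^ (3 * k) := by positivity
    calc (P (k+1) x) ^ 6 = (2 * |Real.sin (π * x)|) ^ 6 * (P k (2*x)) ^ 6 := by
          rw [hstep, mul_pow]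
      _ ≤ (2 * |Real.sin (π * x)|) ^ 6 * (3 ^ (3*k) * (2 * |Real.sin (2 * (π * x))|) ^ 2) := by
          apply mul_le_mul_of_nonneg_left hIH (by positivity)
      _ = 3 ^ (3*k) * ((2 * |Real.sin (π * x)|) ^ 2 *
            ((2 * |Real.sin (π * x)|) ^ 4 * (2 * |Real.sin (2 * (π * x))|) ^ 2)) := by ring
      _ ≤ 3 ^ (3*k) * ((2 * |Real.sin (π * x)|) ^ 2 * 27) := by
          apply mul_le_mul_of_nonneg_left _ (le_of_lt h3)
          apply mul_le_mul_of_nonneg_left hkey (by positivity)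
      _ = 3 ^ (3*(k+1)) * (2 * |Real.sin (π * x)|) ^ 2 := by
          rw [show 3*(k+1) = 3*k + 3 from by ring, pow_add]
          ring

lemma P_le (k : ℕ) (x : ℝ) : P k x ≤ 2 * Real.sqrt 3 ^ k := by
  have hs3 : (0:ℝ) ≤ Real.sqrt 3 := Real.sqrt_nonneg 3
  rcases Nat.eq_zero_or_pos k with hk | hk
  · subst hk; rw [P_zero]; norm_num
  · have h6 := prod6 k hk x
    have hsin : (2 * |Real.sin (π * x)|) ^ 2 ≤ 4 := by
      have h := myAbsSin (π * x)
      have h0 := abs_nonneg (Real.sin (π * x))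
      nlinarith
    have hsq : Real.sqrt 3 ^ 2 = 3 := Real.sq_sqrt (by norm_num)
    have hpow : (2 * Real.sqrt 3 ^ k) ^ 6 = 64 * 3 ^ (3 * k) := by
      rw [mul_pow, ← pow_mul, show k * 6 = 2 * (3 * k) from by ring, pow_mul, hsq]
      norm_num
    have h66 : (P k x) ^ 6 ≤ (2 * Real.sqrt 3 ^ k) ^ 6 := by
      rw [hpow]
      have h3 : (0:ℝ) < 3 ^ (3 * k) := by positivity
      nlinarith [h6, hsin]
    exact le_of_pow_le_pow_left₀ (by norm_num) (by positivity) h66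

lemma sqrt3_ge : (3:ℝ)/2 ≤ Real.sqrt 3 := by
  nlinarith [Real.sq_sqrt (show (0:ℝ) ≤ 3 by norm_num), Real.sqrt_nonneg 3]

lemma geom (k : ℕ) : ∑ j ∈ Finset.range (k + 1), (2 * Real.sqrt 3 ^ j) ≤ 6 * Real.sqrt 3 ^ k := by
  induction k with
  | zero => norm_num
  | succ k ih =>
    rw [Finset.sum_range_succ]
    have hs3 : (0:ℝ) ≤ Real.sqrt 3 := Real.sqrt_nonneg 3
    have hp : (0:ℝ) ≤ Real.sqrt 3 ^ k := by positivity
    have h32 := sqrt3_ge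
    calc ∑ j ∈ Finset.range (k+1), (2 * Real.sqrt 3 ^ j) + 2 * Real.sqrt 3 ^ (k+1)
        ≤ 6 * Real.sqrt 3 ^ k + 2 * Real.sqrt 3 ^ (k+1) := by linarith
      _ ≤ 6 * Real.sqrt 3 ^ (k+1) := by
          rw [pow_succ]
          nlinarith

lemma main_k (k N : ℕ) (hN : N ≤ 2 ^ k) (x : ℝ) : ‖F N x‖ ≤ 6 * Real.sqrt 3 ^ k :=
  calc ‖F N x‖ ≤ ∑ j ∈ Finset.range (k + 1), P j x := norm_F_le_sumP k N hN x
    _ ≤ ∑ j ∈ Finset.range (k + 1), (2 * Real.sqrt 3 ^ j) :=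
        Finset.sum_le_sum fun j _ => P_le j x
    _ ≤ 6 * Real.sqrt 3 ^ k := geom k

lemma sqrt3_pow_le (k N : ℕ) (hN : 1 ≤ N) (h2 : 2 ^ k ≤ 2 * N) :
    Real.sqrt 3 ^ k ≤ 2 * (N : ℝ) ^ (Real.log 3 / Real.log 4) := by
  set α : ℝ := Real.log 3 / Real.log 4 with hα
  have hNpos : (0:ℝ) < N := by exact_mod_cast hN
  have hlog2 : (0:ℝ) < Real.log 2 := Real.log_pos one_lt_two
  have hlog3 : (0:ℝ) < Real.log 3 := Real.log_pos (by norm_num)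
  have h4 : Real.log 4 = 2 * Real.log 2 := by
    rw [show (4:ℝ) = 2 ^ 2 by norm_num, Real.log_pow]
    push_cast; ring
  have hαle : α ≤ 1 := by
    rw [hα, h4, div_le_one (by positivity)]
    have : Real.log 3 ≤ Real.log 4 := Real.log_le_log (by norm_num) (by norm_num)
    rw [h4] at this; linarith
  have hklog : (k : ℝ) * Real.log 2 ≤ Real.log (2 * N) := by
    have hcast : ((2:ℝ)) ^ k ≤ 2 * (N:ℝ) := by exact_mod_cast h2
    have := Real.log_le_log (by positivity) hcast
    rwa [Real.log_pow] at this
  have hsqrt : Real.sqrt 3 ^ k = (3:ℝ) ^ ((1/2 : ℝ) * k) := by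
    rw [Real.sqrt_eq_rpow, ← Real.rpow_natCast ((3:ℝ) ^ ((1:ℝ)/2)) k,
      ← Real.rpow_mul (by norm_num)]
  have hmain : (3:ℝ) ^ ((1/2 : ℝ) * k) ≤ ((2 * N : ℝ)) ^ α := by
    rw [Real.rpow_def_of_pos (by norm_num : (0:ℝ) < 3),
      Real.rpow_def_of_pos (by positivity : (0:ℝ) < 2 * N)]
    apply Real.exp_le_exp.mpr
    rw [hα, h4]
    calc Real.log 3 * (1/2 * k)
        = (Real.log 3 / (2 * Real.log 2)) * ((k:ℝ) * Real.log 2) := by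
          field_simp
      _ ≤ (Real.log 3 / (2 * Real.log 2)) * Real.log (2 * N) := by
          apply mul_le_mul_of_nonneg_left hklog (by positivity)
      _ = Real.log (2 * N) * (Real.log 3 / (2 * Real.log 2)) := mul_comm _ _
  have h2N : ((2 * N : ℝ)) ^ α = (2:ℝ) ^ α * (N:ℝ) ^ α :=
    Real.mul_rpow (by norm_num) (le_of_lt hNpos)
  have h2α : (2:ℝ) ^ α ≤ 2 := by
    calc (2:ℝ) ^ α ≤ (2:ℝ) ^ (1:ℝ) :=
          Real.rpow_le_rpow_of_exponent_le one_le_two hαle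
      _ = 2 := Real.rpow_one 2
  have hNα : (0:ℝ) ≤ (N:ℝ) ^ α := Real.rpow_nonneg (le_of_lt hNpos) α
  calc Real.sqrt 3 ^ k = (3:ℝ) ^ ((1/2 : ℝ) * k) := hsqrt
    _ ≤ ((2 * N : ℝ)) ^ α := hmain
    _ = (2:ℝ) ^ α * (N:ℝ) ^ α := h2N
    _ ≤ 2 * (N:ℝ) ^ α := by nlinarith

end GTMaux

/-- Gelfond's theorem: the exponential sums of the Thue–Morse sequence
`t_n = (-1)^{s₂(n)}` are `O(N^{log 3 / log 4})`, uniformly in `x`. -/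
theorem gelfond_thue_morse :
    ∃ C : ℝ, 0 < C ∧ ∀ N : ℕ, 1 ≤ N → ∀ x : ℝ,
      ‖∑ n ∈ Finset.range N,
          ((-1 : ℂ) ^ (Nat.digits 2 n).sum) * Complex.exp (2 * π * Complex.I * n * x)‖ ≤
        C * (N : ℝ) ^ (Real.log 3 / Real.log 4) := by
  refine ⟨12, by norm_num, ?_⟩
  intro N hN x
  have hFe : (∑ n ∈ Finset.range N,
      ((-1 : ℂ) ^ (Nat.digits 2 n).sum) * Complex.exp (2 * π * Complex.I * n * x)) = F N x := by
    apply Finset.sum_congr rfl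
    intro n _
    simp only [tm, ee]
    congr 2
    push_cast
    ring
  rw [hFe]
  set k := Nat.clog 2 N with hk
  have h1 : N ≤ 2 ^ k := Nat.le_pow_clog one_lt_two N
  have h2 : 2 ^ k ≤ 2 * N := by
    by_cases hk0 : k = 0
    · rw [hk0]; omega
    · have hN2 : 1 < N := by
        by_contra hc
        have hN1 : N = 1 := by omega
        rw [hN1] at hk
        simp [Nat.clog_one_right] at hk
        omega
      have hlt := Nat.pow_pred_clog_lt_self (b := 2) one_lt_two hN2
      rw [← hk] at hlt
      rw [Nat.pred_eq_sub_one] at hlt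
      have hke : 2 ^ k = 2 * 2 ^ (k - 1) := by
        rw [← pow_succ']
        congr 1
        omega
      omega
  have hmk := main_k k N h1 x
  have hs := sqrt3_pow_le k N hN h2
  calc ‖F N x‖ ≤ 6 * Real.sqrt 3 ^ k := hmk
    _ ≤ 6 * (2 * (N : ℝ) ^ (Real.log 3 / Real.log 4)) := by linarith
    _ = 12 * (N : ℝ) ^ (Real.log 3 / Real.log 4) := by ring
end
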